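/- Online observability implies Type-I observability: if for every output o the nonempty set { s | ρ s = o } is online determinable, then for every state s there exists an input word w such that for all s' ≠ s, H(s', w) ≠ H(s, w). -/
import Mathlib


variable {I S O : Type} [Fintype I] [Fintype S] [Fintype O]
  [DecidableEq I] [DecidableEq S] [DecidableEq O]

/-- Output sequence generated from state `s` by input word `w`. -/
def Hout (sig : I → S → S) (rho : S → O) : S → List I → List O
  | s, [] => [rho s]
  | s, i :: w => rho s :: Hout sig rho (sig i s) w

/-- Derivation function: successors of `T` under input `i` producing output `o`. -/
def zeta (sig : I → S → S) (rho : S → O) (T : Finset S) (i : I) (o : O) : Finset S :=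
  (T.image (sig i)).filter (fun s' => rho s' = o)

/-- Online determinability of a finite set of states. -/
inductive Det (sig : I → S → S) (rho : S → O) : Finset S → Prop
  | single (T : Finset S) (h : T.card = 1) : Det sig rho T
  | step (T : Finset S) (i : I) (hinj : (T.image (sig i)).card = T.card)
      (h : ∀ o : O, (zeta sig rho T i o).Nonempty → Det sig rho (zeta sig rho T i o)) :
      Det sig rho T

/-- Safe inputs for a set of states. -/
def psi (sig : I → S → S) (rho : S → O) (T : Finset S) : Set I :=
  {i | (T.image (sig i)).card = T.card ∧
    ∀ o : O, (zeta sig rho T i o).Nonempty → Det sig rho (zeta sig rho T i o)}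

lemma Hout_head (sig : I → S → S) (rho : S → O) (s : S) (w : List I) :
    ∃ l, Hout sig rho s w = rho s :: l := by
  cases w <;> exact ⟨_, rfl⟩

lemma det_key (sig : I → S → S) (rho : S → O) (T : Finset S)
    (hdet : Det sig rho T) :
    ∀ s ∈ T, ∃ w : List I, ∀ s' ∈ T, s' ≠ s →
      Hout sig rho s' w ≠ Hout sig rho s w := by
  induction hdet with
  | single T h =>
    intro s hs
    obtain ⟨a, ha⟩ := Finset.card_eq_one.mp h
    refine ⟨[], fun s' hs' hne => absurd (?_ : s' = s) hne⟩
    subst ha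
    simp_all
  | step T i hinj h ih =>
    intro s hs
    have hzeta : sig i s ∈ zeta sig rho T i (rho (sig i s)) := by
      simp [zeta, Finset.mem_filter]
      exact ⟨s, hs, rfl⟩
    obtain ⟨w, hw⟩ := ih (rho (sig i s)) ⟨_, hzeta⟩ (sig i s) hzeta
    refine ⟨i :: w, fun s' hs' hne heq => ?_⟩
    simp only [Hout] at heq
    obtain ⟨hrho, htail⟩ := List.cons_eq_cons.mp heq
    by_cases ho : rho (sig i s') = rho (sig i s)
    · have hmem : sig i s' ∈ zeta sig rho T i (rho (sig i s)) := by
        simp [zeta, Finset.mem_filter, ho]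
        exact ⟨s', hs', rfl⟩
      have hinjon : Set.InjOn (sig i) T := Finset.card_image_iff.mp hinj
      have : sig i s' ≠ sig i s := fun hc => hne (hinjon hs' hs hc)
      exact hw _ hmem this htail
    · obtain ⟨l1, h1⟩ := Hout_head sig rho (sig i s') w
      obtain ⟨l2, h2⟩ := Hout_head sig rho (sig i s) w
      rw [h1, h2] at htail
      exact ho (List.cons_eq_cons.mp htail).1

theorem online_implies_typeI (sig : I → S → S) (rho : S → O)
    (honline : ∀ o : O, (Finset.univ.filter (fun s : S => rho s = o)).Nonempty →
      Det sig rho (Finset.univ.filter (fun s : S => rho s = o))) :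
    ∀ s : S, ∃ w : List I, ∀ s' : S, s' ≠ s →
      Hout sig rho s' w ≠ Hout sig rho s w := by
  intro s
  have hsmem : s ∈ Finset.univ.filter (fun t : S => rho t = rho s) := by simp
  obtain ⟨w, hw⟩ := det_key sig rho _ (honline (rho s) ⟨s, hsmem⟩) s hsmem
  refine ⟨w, fun s' hne heq => ?_⟩
  by_cases ho : rho s' = rho s
  · exact hw s' (by simp [ho]) hne heq
  · obtain ⟨l1, h1⟩ := Hout_head sig rho s' w
    obtain ⟨l2, h2⟩ := Hout_head sig rho s w
    rw [h1, h2] at heq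
    exact ho (List.cons_eq_cons.mp heq).1
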